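/- Schur complement identity for Pfaffians: let M be a 2(j+k)×2(j+k) skew-symmetric matrix written in block form M = [[A, B],[−B^T, D]] where A is 2j×2j skew-symmetric and invertible and D is 2k×2k skew-symmetric. Then pf(M) = pf(A) · pf(D + B^T A^{-1} B). -/

import Mathlib

open Matrix BigOperators

noncomputable def pf {F : Type*} [Field F] [CharZero F] {n : ℕ}
    (A : Matrix (Fin (2 * n)) (Fin (2 * n)) F) : F :=
  (1 / ((2 : F) ^ n * (Nat.factorial n : F))) *
    ∑ σ : Equiv.Perm (Fin (2 * n)), ((Equiv.Perm.sign σ : ℤ) : F) *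
      ∏ i : Fin n,
        A (σ ⟨2 * i.val, by have := i.isLt; omega⟩)
          (σ ⟨2 * i.val + 1, by have := i.isLt; omega⟩)

/-- Pfaffian on a sum index type, via reindexing to `Fin (2*(j+k))`. -/
noncomputable def pfSum {F : Type*} [Field F] [CharZero F] {j k : ℕ}
    (M : Matrix (Fin (2 * j) ⊕ Fin (2 * k)) (Fin (2 * j) ⊕ Fin (2 * k)) F) : F :=
  pf (Matrix.reindex (finSumFinEquiv.trans (finCongr (by ring)))
        (finSumFinEquiv.trans (finCongr (by ring))) M :
      Matrix (Fin (2 * (j + k))) (Fin (2 * (j + k))) F)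

namespace PfAuxProof

open Equiv Equiv.Perm Finset

variable {n j k : ℕ}

/-- even position of pair `i` -/
def p0 (i : Fin n) : Fin (2 * n) := ⟨2 * i.val, by have := i.isLt; omega⟩
/-- odd position of pair `i` -/
def p1 (i : Fin n) : Fin (2 * n) := ⟨2 * i.val + 1, by have := i.isLt; omega⟩

noncomputable def pfAux (M : Matrix (Fin (2 * n)) (Fin (2 * n)) ℂ) : ℂ :=
  ∑ σ : Perm (Fin (2 * n)), ((Perm.sign σ : ℤ) : ℂ) *
    ∏ i : Fin n, M (σ (p0 i)) (σ (p1 i))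

theorem pf_eq (M : Matrix (Fin (2 * n)) (Fin (2 * n)) ℂ) :
    pf M = (1 / ((2 : ℂ) ^ n * (Nat.factorial n : ℂ))) * pfAux M := rfl

/-- `(i, r) ↦ 2i + r` -/
def e2 (n : ℕ) : Fin n × Fin 2 ≃ Fin (2 * n) where
  toFun p := ⟨2 * p.1.val + p.2.val, by have := p.1.isLt; have := p.2.isLt; omega⟩
  invFun x := (⟨x.val / 2, by have := x.isLt; omega⟩, ⟨x.val % 2, by omega⟩)
  left_inv := by
    rintro ⟨⟨i, hi⟩, ⟨r, hr⟩⟩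
    simp only [Prod.mk.injEq, Fin.mk.injEq]
    omega
  right_inv := by
    rintro ⟨x, hx⟩
    simp only [Fin.mk.injEq]
    omega

@[simp] theorem e2_zero (i : Fin n) : e2 n (i, 0) = p0 i := by
  simp [e2, p0, Fin.ext_iff]

@[simp] theorem e2_one (i : Fin n) : e2 n (i, 1) = p1 i := by
  simp [e2, p1, Fin.ext_iff]

/-- doubling a permutation of `Fin n` to a permutation of `Fin (2n)` sending `2i+r ↦ 2τ(i)+r`. -/
def dblPerm (τ : Perm (Fin n)) : Perm (Fin (2 * n)) :=
  (e2 n).permCongr (Equiv.prodCongrLeft fun _ : Fin 2 => τ)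

theorem dblPerm_apply (τ : Perm (Fin n)) (i : Fin n) (r : Fin 2) :
    dblPerm τ (e2 n (i, r)) = e2 n (τ i, r) := by
  simp [dblPerm, Equiv.permCongr_apply]

@[simp] theorem sign_dblPerm (τ : Perm (Fin n)) : Perm.sign (dblPerm τ) = 1 := by
  have : Perm.sign ((Equiv.prodCongrLeft fun _ : Fin 2 => τ)) = 1 := by
    rw [Equiv.Perm.sign_prodCongrLeft]
    simp [Finset.prod_const, Int.units_sq]
  simp [dblPerm, Equiv.Perm.sign_permCongr, this]

end PfAuxProof

namespace PfAuxProof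
open Equiv Equiv.Perm Finset
variable {n j k : ℕ}

/-- the inverse packaging of a function on doubled indices as a function on pairs -/
def unpair (φ : Fin (2 * n) → Fin (2 * n)) : Fin n → Fin (2 * n) × Fin (2 * n) :=
  fun i => (φ (p0 i), φ (p1 i))

def gEquiv : (Fin (2 * n) → Fin (2 * n)) ≃ (Fin n → Fin (2 * n) × Fin (2 * n)) where
  toFun := unpair
  invFun g x := if h : x.val % 2 = 0 then (g ⟨x.val / 2, by have := x.isLt; omega⟩).1
    else (g ⟨x.val / 2, by have := x.isLt; omega⟩).2
  left_inv := by
    intro φ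
    funext x
    obtain ⟨⟨i, r⟩, rfl⟩ : ∃ p, e2 n p = x := ⟨_, Equiv.apply_symm_apply _ x⟩
    simp only [e2, Equiv.coe_fn_mk, unpair]
    rcases (by omega : r.val = 0 ∨ r.val = 1) with hr | hr
    · refine (dif_pos (by omega)).trans ?_
      congr 1
      simp only [p0, Fin.ext_iff]
      omega
    · refine (dif_neg (by omega)).trans ?_
      congr 1
      simp only [p1, Fin.ext_iff]
      omega
  right_inv := by
    intro g
    funext i
    have h0 : (2 * i.val) % 2 = 0 := by omega
    have h1 : ¬ ((2 * i.val + 1) % 2 = 0) := by omega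
    simp only [unpair, p0, p1]
    refine (congrArg₂ Prod.mk (dif_pos h0) (dif_neg h1)).trans ?_
    simp only [show 2 * i.val / 2 = i.val from by omega,
      show (2 * i.val + 1) / 2 = i.val from by omega, Fin.eta]

theorem prod_pairs (h : Fin (2 * n) → ℂ) :
    (∏ x : Fin (2 * n), h x) = ∏ i : Fin n, h (p0 i) * h (p1 i) := by
  rw [← Equiv.prod_comp (e2 n) h, Fintype.prod_prod_type]
  refine Finset.prod_congr rfl fun i _ => ?_
  rw [Fin.prod_univ_two]
  simp

/-- Vanishing of the sign-weighted sum against a non-bijective function. -/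
theorem T_vanish (C : Matrix (Fin (2 * n)) (Fin (2 * n)) ℂ) (φ : Fin (2 * n) → Fin (2 * n))
    (H : ¬ Function.Bijective φ) :
    (∑ σ : Perm (Fin (2 * n)), ((Perm.sign σ : ℤ) : ℂ) * ∏ x, C (φ x) (σ x)) = 0 := by
  have := Matrix.det_mul_aux (M := Cᵀ) (N := Matrix.of fun _ _ => (1 : ℂ)) (p := φ) H
  rw [← this]
  refine Finset.sum_congr rfl fun σ _ => ?_
  congr 1
  refine Finset.prod_congr rfl fun x _ => ?_
  simp [Matrix.transpose_apply]

theorem T_perm (C : Matrix (Fin (2 * n)) (Fin (2 * n)) ℂ) (τ : Perm (Fin (2 * n))) :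
    (∑ σ : Perm (Fin (2 * n)), ((Perm.sign σ : ℤ) : ℂ) * ∏ x, C (τ x) (σ x))
      = ((Perm.sign τ : ℤ) : ℂ) * C.det := by
  have hbij : Function.Bijective (fun σ : Perm (Fin (2 * n)) => σ * τ) :=
    (Equiv.mulRight τ).bijective
  rw [← Fintype.sum_bijective _ hbij _ _ (fun σ => rfl)]
  have key : ∀ σ : Perm (Fin (2 * n)),
      (∏ x, C (τ x) ((σ * τ) x)) = ∏ x, C x (σ x) := by
    intro σ
    calc (∏ x, C (τ x) ((σ * τ) x)) = ∏ x, C (τ x) (σ (τ x)) := rfl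
    _ = ∏ x, C x (σ x) := Equiv.prod_comp τ (fun y => C y (σ y))
  have hdet : C.det = ∑ σ : Perm (Fin (2 * n)), ((Perm.sign σ : ℤ) : ℂ) * ∏ x, C x (σ x) := by
    rw [← Matrix.det_transpose C, Matrix.det_apply']
    rfl
  rw [hdet, Finset.mul_sum]
  refine Finset.sum_congr rfl fun σ _ => ?_
  rw [key σ]
  have : ((Perm.sign (σ * τ) : ℤ) : ℂ) = ((Perm.sign τ : ℤ) : ℂ) * ((Perm.sign σ : ℤ) : ℂ) := by
    rw [Equiv.Perm.sign_mul]
    push_cast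
    ring
  rw [this]
  ring

/-- L1 : congruence transformation of the Pfaffian sum. -/
theorem pfAux_conj (C M : Matrix (Fin (2 * n)) (Fin (2 * n)) ℂ) :
    pfAux (Cᵀ * M * C) = C.det * pfAux M := by
  classical
  have hentry : ∀ a b, (Cᵀ * M * C) a b
      = ∑ p : Fin (2 * n) × Fin (2 * n), C p.1 a * M p.1 p.2 * C p.2 b := by
    intro a b
    rw [Fintype.sum_prod_type]
    simp only [Matrix.mul_apply, Matrix.transpose_apply, Finset.sum_mul]
    rw [Finset.sum_comm]
  have step1 : pfAux (Cᵀ * M * C)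
      = ∑ φ : Fin (2 * n) → Fin (2 * n),
          (∏ i : Fin n, M (φ (p0 i)) (φ (p1 i))) *
          ∑ σ : Perm (Fin (2 * n)), ((Perm.sign σ : ℤ) : ℂ) * ∏ x, C (φ x) (σ x) := by
    unfold pfAux
    have e1 : ∀ σ : Perm (Fin (2 * n)),
        (∏ i : Fin n, (Cᵀ * M * C) (σ (p0 i)) (σ (p1 i)))
        = ∑ g : Fin n → (Fin (2 * n) × Fin (2 * n)),
            ∏ i, C (g i).1 (σ (p0 i)) * M (g i).1 (g i).2 * C (g i).2 (σ (p1 i)) := by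
      intro σ
      calc (∏ i : Fin n, (Cᵀ * M * C) (σ (p0 i)) (σ (p1 i)))
          = ∏ i : Fin n, ∑ p : Fin (2 * n) × Fin (2 * n),
              C p.1 (σ (p0 i)) * M p.1 p.2 * C p.2 (σ (p1 i)) :=
            Finset.prod_congr rfl fun i _ => hentry _ _
        _ = ∑ g ∈ Fintype.piFinset (fun _ : Fin n =>
              (univ : Finset (Fin (2 * n) × Fin (2 * n)))),
              ∏ i, C (g i).1 (σ (p0 i)) * M (g i).1 (g i).2 * C (g i).2 (σ (p1 i)) :=
            Finset.prod_univ_sum _ _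
        _ = _ := by rw [Fintype.piFinset_univ]
    simp_rw [e1, Finset.mul_sum]
    rw [Finset.sum_comm]
    rw [← Equiv.sum_comp (gEquiv (n := n))]
    refine Finset.sum_congr rfl fun φ _ => ?_
    simp only [gEquiv, Equiv.coe_fn_mk, unpair]
    refine Finset.sum_congr rfl fun σ _ => ?_
    rw [prod_pairs (fun x => C (φ x) (σ x))]
    have hsplit : (∏ i : Fin n,
          C (φ (p0 i)) (σ (p0 i)) * M (φ (p0 i)) (φ (p1 i)) * C (φ (p1 i)) (σ (p1 i)))
        = (∏ i : Fin n, M (φ (p0 i)) (φ (p1 i))) *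
          ∏ i : Fin n, C (φ (p0 i)) (σ (p0 i)) * C (φ (p1 i)) (σ (p1 i)) := by
      rw [← Finset.prod_mul_distrib]
      exact Finset.prod_congr rfl fun i _ => by ring
    rw [hsplit]
    ring
  rw [step1]
  have hfilter : (∑ φ : Fin (2 * n) → Fin (2 * n),
        (∏ i : Fin n, M (φ (p0 i)) (φ (p1 i))) *
        ∑ σ : Perm (Fin (2 * n)), ((Perm.sign σ : ℤ) : ℂ) * ∏ x, C (φ x) (σ x))
      = ∑ φ ∈ Finset.univ.filter (fun φ : Fin (2 * n) → Fin (2 * n) => Function.Bijective φ),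
        (∏ i : Fin n, M (φ (p0 i)) (φ (p1 i))) *
        ∑ σ : Perm (Fin (2 * n)), ((Perm.sign σ : ℤ) : ℂ) * ∏ x, C (φ x) (σ x) := by
    refine (Finset.sum_subset (Finset.filter_subset _ _) fun φ _ hφ => ?_).symm
    have hb : ¬ Function.Bijective φ := by simpa using hφ
    rw [T_vanish C φ hb, mul_zero]
  rw [hfilter]
  have hbij : (∑ φ ∈ Finset.univ.filter
        (fun φ : Fin (2 * n) → Fin (2 * n) => Function.Bijective φ),
        (∏ i : Fin n, M (φ (p0 i)) (φ (p1 i))) *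
        ∑ σ : Perm (Fin (2 * n)), ((Perm.sign σ : ℤ) : ℂ) * ∏ x, C (φ x) (σ x))
      = ∑ τ : Perm (Fin (2 * n)),
        (∏ i : Fin n, M (τ (p0 i)) (τ (p1 i))) *
        ∑ σ : Perm (Fin (2 * n)), ((Perm.sign σ : ℤ) : ℂ) * ∏ x, C (τ x) (σ x) := by
    refine Finset.sum_bij (fun φ h => Equiv.ofBijective φ (by simpa using (Finset.mem_filter.1 h).2))
      (fun _ _ => Finset.mem_univ _) (fun _ _ _ _ h => by injection h)
      (fun τ _ => ⟨⇑τ, Finset.mem_filter.2 ⟨Finset.mem_univ _, τ.bijective⟩,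
        Equiv.coe_fn_injective rfl⟩) (fun φ h => rfl)
  rw [hbij]
  simp_rw [T_perm]
  unfold pfAux
  rw [Finset.mul_sum]
  exact Finset.sum_congr rfl fun τ _ => by ring

end PfAuxProof

namespace PfAuxProof
open Equiv Equiv.Perm Finset
variable {j k : ℕ}

/-- the reindexing equivalence -/
def EE (j k : ℕ) : (Fin (2 * j) ⊕ Fin (2 * k)) ≃ Fin (2 * (j + k)) :=
  finSumFinEquiv.trans (finCongr (by ring))

theorem finSumFinEquiv_symm_lt {p q : ℕ} (x : Fin (p + q)) (h : x.val < p) :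
    finSumFinEquiv.symm x = Sum.inl ⟨x.val, h⟩ := by
  rw [Equiv.symm_apply_eq]
  exact (Fin.ext (by simp)).symm

theorem finSumFinEquiv_symm_ge {p q : ℕ} (x : Fin (p + q)) (h : ¬ x.val < p) :
    finSumFinEquiv.symm x = Sum.inr ⟨x.val - p, by have := x.isLt; omega⟩ := by
  rw [Equiv.symm_apply_eq]
  refine (Fin.ext ?_).symm
  simp only [finSumFinEquiv_apply_right, Fin.coe_natAdd]
  omega

theorem EE_inl (x : Fin (2 * j)) : (EE j k (Sum.inl x)).val = x.val := by
  simp [EE]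

theorem EE_inr (x : Fin (2 * k)) : (EE j k (Sum.inr x)).val = 2 * j + x.val := by
  simp [EE]

theorem EE_symm_lt (x : Fin (2 * (j + k))) (h : x.val < 2 * j) :
    (EE j k).symm x = Sum.inl ⟨x.val, h⟩ := by
  rw [Equiv.symm_apply_eq]
  exact (Fin.ext (by rw [EE_inl])).symm

theorem EE_symm_ge (x : Fin (2 * (j + k))) (h : ¬ x.val < 2 * j) :
    (EE j k).symm x = Sum.inr ⟨x.val - 2 * j, by have := x.isLt; omega⟩ := by
  rw [Equiv.symm_apply_eq]
  refine (Fin.ext ?_).symm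
  rw [EE_inr]
  show 2 * j + (x.val - 2 * j) = x.val
  omega

/-- permutation of `Fin (j+k)` sending `[0,j)` onto `S` (monotonically on each part). -/
def tS (S : Finset (Fin (j + k))) (hS : S.card = j) : Perm (Fin (j + k)) :=
  finSumFinEquiv.symm.trans
    ((((S.orderIsoOfFin hS).toEquiv.sumCongr
      (((Sᶜ).orderIsoOfFin (by simp [Finset.card_compl, hS])).toEquiv.trans
        (Equiv.subtypeEquivRight (fun x => Finset.mem_compl)))).trans
    (Equiv.sumCompl (fun x => x ∈ S))))

theorem tS_mem (S : Finset (Fin (j + k))) (hS : S.card = j) (a : Fin (j + k))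
    (ha : a.val < j) : tS S hS a ∈ S := by
  unfold tS
  rw [Equiv.trans_apply, finSumFinEquiv_symm_lt a ha]
  simp only [Equiv.trans_apply, Equiv.sumCongr_apply, Sum.map_inl, Equiv.sumCompl_apply_inl]
  exact (S.orderIsoOfFin hS ⟨a.val, ha⟩).2

theorem tS_not_mem (S : Finset (Fin (j + k))) (hS : S.card = j) (a : Fin (j + k))
    (ha : ¬ a.val < j) : tS S hS a ∉ S := by
  unfold tS
  rw [Equiv.trans_apply, finSumFinEquiv_symm_ge a ha]
  simp only [Equiv.trans_apply, Equiv.sumCongr_apply, Sum.map_inr, Equiv.sumCompl_apply_inr]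
  exact Subtype.prop (p := fun x => x ∉ S) _

theorem tS_symm_lt_iff (S : Finset (Fin (j + k))) (hS : S.card = j) (i : Fin (j + k)) :
    ((tS S hS).symm i).val < j ↔ i ∈ S := by
  constructor
  · intro h
    have := tS_mem S hS _ h
    rwa [Equiv.apply_symm_apply] at this
  · intro h
    by_contra hc
    have := tS_not_mem S hS _ hc
    rw [Equiv.apply_symm_apply] at this
    exact this h

def blockPerm (σ₁ : Perm (Fin (2 * j))) (σ₂ : Perm (Fin (2 * k))) : Perm (Fin (2 * (j + k))) :=
  (EE j k).permCongr (σ₁.sumCongr σ₂)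

theorem blockPerm_lt (σ₁ : Perm (Fin (2 * j))) (σ₂ : Perm (Fin (2 * k)))
    (x : Fin (2 * (j + k))) (h : x.val < 2 * j) :
    blockPerm σ₁ σ₂ x = ⟨(σ₁ ⟨x.val, h⟩).val,
      by have := (σ₁ ⟨x.val, h⟩).isLt; omega⟩ := by
  unfold blockPerm
  rw [Equiv.permCongr_apply, EE_symm_lt x h]
  refine Fin.ext ?_
  simp only [Equiv.sumCongr_apply, Sum.map_inl]
  rw [EE_inl]

theorem blockPerm_ge (σ₁ : Perm (Fin (2 * j))) (σ₂ : Perm (Fin (2 * k)))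
    (x : Fin (2 * (j + k))) (h : ¬ x.val < 2 * j) :
    blockPerm σ₁ σ₂ x = ⟨2 * j + (σ₂ ⟨x.val - 2 * j, by have := x.isLt; omega⟩).val,
      by have := (σ₂ ⟨x.val - 2 * j, by have := x.isLt; omega⟩).isLt; omega⟩ := by
  unfold blockPerm
  rw [Equiv.permCongr_apply, EE_symm_ge x h]
  refine Fin.ext ?_
  simp only [Equiv.sumCongr_apply, Sum.map_inr]
  rw [EE_inr]

theorem blockPerm_lt_iff (σ₁ : Perm (Fin (2 * j))) (σ₂ : Perm (Fin (2 * k)))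
    (x : Fin (2 * (j + k))) :
    (blockPerm σ₁ σ₂ x).val < 2 * j ↔ x.val < 2 * j := by
  by_cases h : x.val < 2 * j
  · rw [blockPerm_lt σ₁ σ₂ x h]
    simp only [h, iff_true]
    exact (σ₁ ⟨x.val, h⟩).isLt
  · rw [blockPerm_ge σ₁ σ₂ x h]
    simp only [h, iff_false]
    omega

/-- the permutation associated to a triple `(S, σ₁, σ₂)`. -/
def Psi (S : Finset (Fin (j + k))) (hS : S.card = j)
    (σ₁ : Perm (Fin (2 * j))) (σ₂ : Perm (Fin (2 * k))) : Perm (Fin (2 * (j + k))) :=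
  (dblPerm (tS S hS).symm).trans (blockPerm σ₁ σ₂)

theorem dblPerm_cancel {n : ℕ} (τ : Perm (Fin n)) (x : Fin (2 * n)) :
    dblPerm τ (dblPerm τ.symm x) = x := by
  obtain ⟨p, rfl⟩ : ∃ p, e2 n p = x := ⟨(e2 n).symm x, by simp⟩
  obtain ⟨m, r⟩ := p
  rw [dblPerm_apply, dblPerm_apply, Equiv.apply_symm_apply]

theorem Psi_p0 (S : Finset (Fin (j + k))) (hS : S.card = j)
    (σ₁ : Perm (Fin (2 * j))) (σ₂ : Perm (Fin (2 * k))) (i : Fin (j + k)) :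
    Psi S hS σ₁ σ₂ (p0 i) = blockPerm σ₁ σ₂ (p0 ((tS S hS).symm i)) := by
  unfold Psi
  rw [Equiv.trans_apply, ← e2_zero, dblPerm_apply, e2_zero]

theorem Psi_p1 (S : Finset (Fin (j + k))) (hS : S.card = j)
    (σ₁ : Perm (Fin (2 * j))) (σ₂ : Perm (Fin (2 * k))) (i : Fin (j + k)) :
    Psi S hS σ₁ σ₂ (p1 i) = blockPerm σ₁ σ₂ (p1 ((tS S hS).symm i)) := by
  unfold Psi
  rw [Equiv.trans_apply, ← e2_one, dblPerm_apply, e2_one]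

theorem sign_Psi (S : Finset (Fin (j + k))) (hS : S.card = j)
    (σ₁ : Perm (Fin (2 * j))) (σ₂ : Perm (Fin (2 * k))) :
    Perm.sign (Psi S hS σ₁ σ₂) = Perm.sign σ₁ * Perm.sign σ₂ := by
  have h : Psi S hS σ₁ σ₂ = blockPerm σ₁ σ₂ * dblPerm (tS S hS).symm := rfl
  rw [h, Equiv.Perm.sign_mul, sign_dblPerm, mul_one, blockPerm,
    Equiv.Perm.sign_permCongr, Equiv.Perm.sign_sumCongr]

end PfAuxProof

namespace PfAuxProof
open Equiv Equiv.Perm Finset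
variable {j k : ℕ}

def lowEquiv : {x : Fin (2 * (j + k)) // x.val < 2 * j} ≃ Fin (2 * j) where
  toFun x := ⟨x.1.val, x.2⟩
  invFun y := ⟨⟨y.val, by have := y.isLt; omega⟩, y.isLt⟩
  left_inv := by rintro ⟨⟨v, hv⟩, h⟩; rfl
  right_inv := by rintro ⟨v, hv⟩; rfl

def highEquiv : {x : Fin (2 * (j + k)) // ¬ x.val < 2 * j} ≃ Fin (2 * k) where
  toFun x := ⟨x.1.val - 2 * j, by have := x.1.isLt; have := x.2; omega⟩
  invFun y := ⟨⟨2 * j + y.val, by have := y.isLt; omega⟩, by show ¬ 2 * j + y.val < 2 * j; omega⟩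
  left_inv := by
    rintro ⟨⟨v, hv⟩, h⟩
    apply Subtype.ext
    apply Fin.ext
    show 2 * j + (v - 2 * j) = v
    simp only [not_lt] at h
    omega
  right_inv := by
    rintro ⟨v, hv⟩
    apply Fin.ext
    show 2 * j + v - 2 * j = v
    omega

theorem p0_or_p1 (x : Fin (2 * (j + k))) :
    (∃ m, x = p0 m) ∨ (∃ m, x = p1 m) := by
  by_cases h : x.val % 2 = 0
  · exact Or.inl ⟨⟨x.val / 2, by have := x.isLt; omega⟩, Fin.ext (by show x.val = 2 * (x.val / 2); omega)⟩
  · exact Or.inr ⟨⟨x.val / 2, by have := x.isLt; omega⟩, Fin.ext (by show x.val = 2 * (x.val / 2) + 1; omega)⟩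

theorem e2_cases {n : ℕ} (m : Fin n) (r : Fin 2) :
    e2 n (m, r) = p0 m ∨ e2 n (m, r) = p1 m := by
  rcases (by omega : r.val = 0 ∨ r.val = 1) with h | h
  · exact Or.inl (Fin.ext (by show 2 * m.val + r.val = 2 * m.val; omega))
  · exact Or.inr (Fin.ext (by show 2 * m.val + r.val = 2 * m.val + 1; omega))

theorem dblPerm_p0 {n : ℕ} (τ : Perm (Fin n)) (i : Fin n) :
    dblPerm τ (p0 i) = p0 (τ i) := by
  rw [← e2_zero, dblPerm_apply, e2_zero]

theorem dblPerm_p1 {n : ℕ} (τ : Perm (Fin n)) (i : Fin n) :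
    dblPerm τ (p1 i) = p1 (τ i) := by
  rw [← e2_one, dblPerm_apply, e2_one]

theorem p0_castAdd_lt (a : Fin j) : (p0 (Fin.castAdd k a) : Fin (2 * (j + k))).val < 2 * j := by
  show 2 * (Fin.castAdd k a).val < 2 * j
  have := a.isLt
  simp only [Fin.coe_castAdd]
  omega

theorem p1_castAdd_lt (a : Fin j) : (p1 (Fin.castAdd k a) : Fin (2 * (j + k))).val < 2 * j := by
  show 2 * (Fin.castAdd k a).val + 1 < 2 * j
  have := a.isLt
  simp only [Fin.coe_castAdd]
  omega

theorem p0_natAdd_ge (b : Fin k) : ¬ (p0 (Fin.natAdd j b) : Fin (2 * (j + k))).val < 2 * j := by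
  show ¬ 2 * (Fin.natAdd j b).val < 2 * j
  simp only [Fin.coe_natAdd]
  omega

theorem p1_natAdd_ge (b : Fin k) : ¬ (p1 (Fin.natAdd j b) : Fin (2 * (j + k))).val < 2 * j := by
  show ¬ 2 * (Fin.natAdd j b).val + 1 < 2 * j
  simp only [Fin.coe_natAdd]
  omega

theorem blockPerm_p0_cast (σ₁ : Perm (Fin (2 * j))) (σ₂ : Perm (Fin (2 * k))) (a : Fin j) :
    blockPerm σ₁ σ₂ (p0 (Fin.castAdd k a))
      = ⟨(σ₁ (p0 a)).val, by have := (σ₁ (p0 a)).isLt; omega⟩ := by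
  rw [blockPerm_lt σ₁ σ₂ _ (p0_castAdd_lt a)]
  exact Fin.ext (congrArg (fun z => (σ₁ z).val)
    (Fin.ext (by show 2 * (Fin.castAdd k a).val = 2 * a.val; simp)))

theorem blockPerm_p1_cast (σ₁ : Perm (Fin (2 * j))) (σ₂ : Perm (Fin (2 * k))) (a : Fin j) :
    blockPerm σ₁ σ₂ (p1 (Fin.castAdd k a))
      = ⟨(σ₁ (p1 a)).val, by have := (σ₁ (p1 a)).isLt; omega⟩ := by
  rw [blockPerm_lt σ₁ σ₂ _ (p1_castAdd_lt a)]
  exact Fin.ext (congrArg (fun z => (σ₁ z).val)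
    (Fin.ext (by show 2 * (Fin.castAdd k a).val + 1 = 2 * a.val + 1; simp)))

theorem blockPerm_p0_nat (σ₁ : Perm (Fin (2 * j))) (σ₂ : Perm (Fin (2 * k))) (b : Fin k) :
    blockPerm σ₁ σ₂ (p0 (Fin.natAdd j b))
      = ⟨2 * j + (σ₂ (p0 b)).val, by have := (σ₂ (p0 b)).isLt; omega⟩ := by
  rw [blockPerm_ge σ₁ σ₂ _ (p0_natAdd_ge b)]
  refine Fin.ext (congrArg (fun z => 2 * j + (σ₂ z).val) (Fin.ext ?_))
  show 2 * (Fin.natAdd j b).val - 2 * j = 2 * b.val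
  simp only [Fin.coe_natAdd]
  omega

theorem blockPerm_p1_nat (σ₁ : Perm (Fin (2 * j))) (σ₂ : Perm (Fin (2 * k))) (b : Fin k) :
    blockPerm σ₁ σ₂ (p1 (Fin.natAdd j b))
      = ⟨2 * j + (σ₂ (p1 b)).val, by have := (σ₂ (p1 b)).isLt; omega⟩ := by
  rw [blockPerm_ge σ₁ σ₂ _ (p1_natAdd_ge b)]
  refine Fin.ext (congrArg (fun z => 2 * j + (σ₂ z).val) (Fin.ext ?_))
  show 2 * (Fin.natAdd j b).val + 1 - 2 * j = 2 * b.val + 1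
  simp only [Fin.coe_natAdd]
  omega

theorem Psi_mem_iff (S : Finset (Fin (j + k))) (hS : S.card = j)
    (σ₁ : Perm (Fin (2 * j))) (σ₂ : Perm (Fin (2 * k))) (i : Fin (j + k)) :
    (Psi S hS σ₁ σ₂ (p0 i)).val < 2 * j ↔ i ∈ S := by
  rw [Psi_p0, blockPerm_lt_iff]
  rw [show (p0 ((tS S hS).symm i) : Fin (2 * (j + k))).val = 2 * ((tS S hS).symm i).val from rfl]
  rw [← tS_symm_lt_iff S hS i]
  omega

theorem tS_mem_iff (S : Finset (Fin (j + k))) (hS : S.card = j) (m : Fin (j + k)) :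
    tS S hS m ∈ S ↔ m.val < j := by
  constructor
  · intro h
    by_contra hc
    exact tS_not_mem S hS m hc h
  · exact tS_mem S hS m

end PfAuxProof

namespace PfAuxProof
open Equiv Equiv.Perm Finset
variable {j k : ℕ}

theorem pfAux_blockDiag (A : Matrix (Fin (2 * j)) (Fin (2 * j)) ℂ)
    (D : Matrix (Fin (2 * k)) (Fin (2 * k)) ℂ) :
    pfAux (Matrix.reindex (EE j k) (EE j k) (Matrix.fromBlocks A 0 0 D))
      = (Nat.choose (j + k) j : ℂ) * (pfAux A * pfAux D) := by
  classical
  set N := Matrix.reindex (EE j k) (EE j k) (Matrix.fromBlocks A 0 0 D) with hN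
  have N_ll : ∀ (x y : Fin (2 * (j + k))) (hx : x.val < 2 * j) (hy : y.val < 2 * j),
      N x y = A ⟨x.val, hx⟩ ⟨y.val, hy⟩ := by
    intro x y hx hy
    simp [hN, Matrix.reindex_apply, Matrix.submatrix_apply, EE_symm_lt x hx, EE_symm_lt y hy]
  have N_rr : ∀ (x y : Fin (2 * (j + k))) (hx : ¬ x.val < 2 * j) (hy : ¬ y.val < 2 * j),
      N x y = D ⟨x.val - 2 * j, by have := x.isLt; omega⟩ ⟨y.val - 2 * j, by have := y.isLt; omega⟩ := by
    intro x y hx hy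
    simp [hN, Matrix.reindex_apply, Matrix.submatrix_apply, EE_symm_ge x hx, EE_symm_ge y hy]
  have N_lr : ∀ (x y : Fin (2 * (j + k))), x.val < 2 * j → ¬ y.val < 2 * j → N x y = 0 := by
    intro x y hx hy
    simp [hN, Matrix.reindex_apply, Matrix.submatrix_apply, EE_symm_lt x hx, EE_symm_ge y hy]
  have N_rl : ∀ (x y : Fin (2 * (j + k))), ¬ x.val < 2 * j → y.val < 2 * j → N x y = 0 := by
    intro x y hx hy
    simp [hN, Matrix.reindex_apply, Matrix.submatrix_apply, EE_symm_ge x hx, EE_symm_lt y hy]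
  set P : Perm (Fin (2 * (j + k))) → Prop :=
    fun σ => ∀ i : Fin (j + k), ((σ (p0 i)).val < 2 * j ↔ (σ (p1 i)).val < 2 * j) with hP
  have hfilter : pfAux N
      = ∑ σ ∈ Finset.univ.filter P,
          ((Perm.sign σ : ℤ) : ℂ) * ∏ i, N (σ (p0 i)) (σ (p1 i)) := by
    refine (Finset.sum_subset (Finset.filter_subset _ _) fun σ _ hσ => ?_).symm
    have hnp : ¬ ∀ i : Fin (j + k), ((σ (p0 i)).val < 2 * j ↔ (σ (p1 i)).val < 2 * j) := by
      have : ¬ P σ := by simpa using hσ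
      rw [hP] at this
      exact this
    push_neg at hnp
    obtain ⟨i, hi⟩ := hnp
    have hzero : N (σ (p0 i)) (σ (p1 i)) = 0 := by
      rcases hi with ⟨h0, h1⟩ | ⟨h0, h1⟩
      · exact N_lr _ _ h0 (by omega)
      · exact N_rl _ _ (by omega) h1
    rw [Finset.prod_eq_zero (Finset.mem_univ i) hzero, mul_zero]
  have hbij : (∑ σ ∈ Finset.univ.filter P,
        ((Perm.sign σ : ℤ) : ℂ) * ∏ i, N (σ (p0 i)) (σ (p1 i)))
      = ∑ x ∈ (Finset.powersetCard j (Finset.univ : Finset (Fin (j + k)))).sigma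
            (fun _ => (Finset.univ : Finset (Perm (Fin (2 * j)) × Perm (Fin (2 * k))))),
          (((Perm.sign x.2.1 : ℤ) : ℂ) * ∏ a, A (x.2.1 (p0 a)) (x.2.1 (p1 a))) *
          (((Perm.sign x.2.2 : ℤ) : ℂ) * ∏ b, D (x.2.2 (p0 b)) (x.2.2 (p1 b))) := by
    refine (Finset.sum_bij (fun (x : Σ _ : Finset (Fin (j + k)),
        Perm (Fin (2 * j)) × Perm (Fin (2 * k))) hx =>
        Psi x.1 (Finset.mem_powersetCard.1 (Finset.mem_sigma.1 hx).1).2 x.2.1 x.2.2)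
      ?_ ?_ ?_ ?_).symm
    · -- maps into the filter
      rintro ⟨S, σ₁, σ₂⟩ hx
      set hS := (Finset.mem_powersetCard.1 (Finset.mem_sigma.1 hx).1).2
      refine Finset.mem_filter.2 ⟨Finset.mem_univ _, fun i => ?_⟩
      rw [Psi_p0, Psi_p1, blockPerm_lt_iff, blockPerm_lt_iff]
      show 2 * ((tS S hS).symm i).val < 2 * j ↔ 2 * ((tS S hS).symm i).val + 1 < 2 * j
      omega
    · -- injective
      rintro ⟨S₁, a, b⟩ hx ⟨S₂, c, d⟩ hy h
      set h1 := (Finset.mem_powersetCard.1 (Finset.mem_sigma.1 hx).1).2 with hh1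
      set h2 := (Finset.mem_powersetCard.1 (Finset.mem_sigma.1 hy).1).2 with hh2
      have hSeq : S₁ = S₂ := by
        ext i
        rw [← Psi_mem_iff S₁ h1 a b i, ← Psi_mem_iff S₂ h2 c d i]
        rw [show Psi S₁ h1 a b = Psi S₂ h2 c d from h]
      subst hSeq
      have hbp : blockPerm a b = blockPerm c d := by
        apply Equiv.ext
        intro y
        have hcan : ∀ z : Fin (2 * (j + k)),
            dblPerm (tS S₁ h1).symm (dblPerm (tS S₁ h1) z) = z := by
          intro z
          have := dblPerm_cancel (tS S₁ h1).symm z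
          rwa [Equiv.symm_symm] at this
        have happ := congrArg (fun (q : Perm (Fin (2 * (j + k)))) => q (dblPerm (tS S₁ h1) y)) h
        simp only [Psi, Equiv.trans_apply] at happ
        first
          | exact happ
          | rwa [hcan y] at happ
          | rwa [hcan y, hcan y] at happ
      have hsc : Equiv.sumCongr a b = Equiv.sumCongr c d :=
        (Equiv.permCongr (EE j k)).injective hbp
      have hac : a = c := by
        apply Equiv.ext
        intro z
        have := congrArg (fun (q : Equiv.Perm (Fin (2 * j) ⊕ Fin (2 * k))) => q (Sum.inl z)) hsc
        simpa using this
      have hbd : b = d := by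
        apply Equiv.ext
        intro z
        have := congrArg (fun (q : Equiv.Perm (Fin (2 * j) ⊕ Fin (2 * k))) => q (Sum.inr z)) hsc
        simpa using this
      subst hac
      subst hbd
      rfl
    · -- surjective
      intro σ hσ
      have hPσ : P σ := (Finset.mem_filter.1 hσ).2
      rw [hP] at hPσ
      set S := Finset.univ.filter (fun i : Fin (j + k) => (σ (p0 i)).val < 2 * j) with hSdef
      have hmemS : ∀ i : Fin (j + k), i ∈ S ↔ (σ (p0 i)).val < 2 * j := by
        intro i
        simp [hSdef]
      have hcard : S.card = j := by
        have f1 : ∀ z : ({i // i ∈ S} × Fin 2), (σ (e2 (j + k) (z.1.1, z.2))).val < 2 * j := by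
          rintro ⟨⟨i, hi⟩, r⟩
          rcases e2_cases i r with he | he <;> rw [he]
          · exact (hmemS i).1 hi
          · exact (hPσ i).1 ((hmemS i).1 hi)
        have f2 : ∀ z : ({i // i ∈ Sᶜ} × Fin 2), ¬ (σ (e2 (j + k) (z.1.1, z.2))).val < 2 * j := by
          rintro ⟨⟨i, hi⟩, r⟩
          have hni : ¬ (σ (p0 i)).val < 2 * j := by
            intro hc
            exact (Finset.mem_compl.1 hi) ((hmemS i).2 hc)
          rcases e2_cases i r with he | he <;> rw [he]
          · exact hni
          · intro hc
            exact hni ((hPσ i).2 hc)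
        have hinj1 : Function.Injective (fun z : ({i // i ∈ S} × Fin 2) =>
            (⟨σ (e2 (j + k) (z.1.1, z.2)), f1 z⟩ : {x : Fin (2 * (j + k)) // x.val < 2 * j})) := by
          rintro ⟨⟨i, hi⟩, r⟩ ⟨⟨i', hi'⟩, r'⟩ hzz
          have := (e2 (j + k)).injective (σ.injective (Subtype.ext_iff.1 hzz))
          rw [Prod.ext_iff] at this
          obtain ⟨h1', h2'⟩ := this
          simp only [] at h1' h2'
          exact Prod.ext (Subtype.ext h1') h2'
        have hinj2 : Function.Injective (fun z : ({i // i ∈ Sᶜ} × Fin 2) =>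
            (⟨σ (e2 (j + k) (z.1.1, z.2)), f2 z⟩ : {x : Fin (2 * (j + k)) // ¬ x.val < 2 * j})) := by
          rintro ⟨⟨i, hi⟩, r⟩ ⟨⟨i', hi'⟩, r'⟩ hzz
          have := (e2 (j + k)).injective (σ.injective (Subtype.ext_iff.1 hzz))
          rw [Prod.ext_iff] at this
          obtain ⟨h1', h2'⟩ := this
          simp only [] at h1' h2'
          exact Prod.ext (Subtype.ext h1') h2'
        have hc1 := Fintype.card_le_of_injective _ hinj1
        have hc2 := Fintype.card_le_of_injective _ hinj2
        rw [Fintype.card_prod, Fintype.card_coe, Fintype.card_fin,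
          Fintype.card_congr (lowEquiv (j := j) (k := k)), Fintype.card_fin] at hc1
        rw [Fintype.card_prod, Fintype.card_coe, Fintype.card_fin,
          Fintype.card_congr (highEquiv (j := j) (k := k)), Fintype.card_fin] at hc2
        have hcc := Finset.card_add_card_compl S
        rw [Fintype.card_fin] at hcc
        omega
      set τ := tS S hcard with hτ
      set σ' := (dblPerm τ).trans σ with hσ'
      have hτiff : ∀ m : Fin (j + k), τ m ∈ S ↔ m.val < j := tS_mem_iff S hcard
      have hpres : ∀ x : Fin (2 * (j + k)), x.val < 2 * j ↔ (σ' x).val < 2 * j := by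
        intro x
        rcases p0_or_p1 x with ⟨m, rfl⟩ | ⟨m, rfl⟩
        · have hx : (p0 m : Fin (2 * (j + k))).val < 2 * j ↔ m.val < j := by
            show 2 * m.val < 2 * j ↔ m.val < j
            omega
          rw [hx, hσ']
          show _ ↔ (σ (dblPerm τ (p0 m))).val < 2 * j
          rw [dblPerm_p0, ← hmemS, hτiff]
        · have hx : (p1 m : Fin (2 * (j + k))).val < 2 * j ↔ m.val < j := by
            show 2 * m.val + 1 < 2 * j ↔ m.val < j
            omega
          rw [hx, hσ']
          show _ ↔ (σ (dblPerm τ (p1 m))).val < 2 * j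
          rw [dblPerm_p1, ← (hPσ (τ m)), ← hmemS, hτiff]
      set σ₁ : Perm (Fin (2 * j)) := lowEquiv.permCongr (Equiv.Perm.subtypePerm σ' (fun x => (hpres x).symm)) with hσ₁
      set σ₂ : Perm (Fin (2 * k)) := highEquiv.permCongr
        (Equiv.Perm.subtypePerm σ' (fun x => not_iff_not.2 (hpres x).symm)) with hσ₂
      have hbp : ∀ y : Fin (2 * (j + k)), blockPerm σ₁ σ₂ y = σ' y := by
        intro y
        by_cases hy : y.val < 2 * j
        · rw [blockPerm_lt σ₁ σ₂ y hy]
          have hlow : lowEquiv.symm (⟨y.val, hy⟩ : Fin (2 * j)) = ⟨y, hy⟩ := by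
            apply Subtype.ext
            exact Fin.ext rfl
          apply Fin.ext
          show (σ₁ ⟨y.val, hy⟩).val = (σ' y).val
          rw [hσ₁]
          simp only [Equiv.permCongr_apply, hlow, Equiv.Perm.subtypePerm_apply]
          rfl
        · rw [blockPerm_ge σ₁ σ₂ y hy]
          have hhigh : highEquiv.symm (⟨y.val - 2 * j, by have := y.isLt; omega⟩ : Fin (2 * k))
              = ⟨y, hy⟩ := by
            apply Subtype.ext
            apply Fin.ext
            show 2 * j + (y.val - 2 * j) = y.val
            omega
          apply Fin.ext
          show 2 * j + (σ₂ ⟨y.val - 2 * j, _⟩).val = (σ' y).val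
          rw [hσ₂]
          simp only [Equiv.permCongr_apply, hhigh, Equiv.Perm.subtypePerm_apply]
          show 2 * j + ((σ' y).val - 2 * j) = (σ' y).val
          have := (not_iff_not.2 (hpres y)).1 hy
          omega
      have hfinal : Psi S hcard σ₁ σ₂ = σ := by
        apply Equiv.ext
        intro x
        show blockPerm σ₁ σ₂ (dblPerm τ.symm x) = σ x
        rw [hbp, hσ']
        show σ (dblPerm τ (dblPerm τ.symm x)) = σ x
        rw [dblPerm_cancel τ x]
      exact ⟨⟨S, (σ₁, σ₂)⟩, Finset.mem_sigma.2
        ⟨Finset.mem_powersetCard.2 ⟨Finset.subset_univ _, hcard⟩, Finset.mem_univ _⟩, hfinal⟩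
    · -- values agree
      rintro ⟨S, σ₁, σ₂⟩ hx
      set hS := (Finset.mem_powersetCard.1 (Finset.mem_sigma.1 hx).1).2
      have hprod : (∏ i, N (Psi S hS σ₁ σ₂ (p0 i)) (Psi S hS σ₁ σ₂ (p1 i)))
          = (∏ a, A (σ₁ (p0 a)) (σ₁ (p1 a))) * ∏ b, D (σ₂ (p0 b)) (σ₂ (p1 b)) := by
        simp only [Psi_p0, Psi_p1]
        rw [Equiv.prod_comp (tS S hS).symm
          (fun m => N (blockPerm σ₁ σ₂ (p0 m)) (blockPerm σ₁ σ₂ (p1 m)))]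
        rw [Fin.prod_univ_add (f := fun m : Fin (j + k) =>
          N (blockPerm σ₁ σ₂ (p0 m)) (blockPerm σ₁ σ₂ (p1 m)))]
        congr 1
        · refine Finset.prod_congr rfl fun a _ => ?_
          rw [blockPerm_p0_cast, blockPerm_p1_cast,
            N_ll _ _ ((σ₁ (p0 a)).isLt) ((σ₁ (p1 a)).isLt)]
          try (congr 1 <;> exact Fin.ext rfl)
        · refine Finset.prod_congr rfl fun b _ => ?_
          rw [blockPerm_p0_nat, blockPerm_p1_nat,
            N_rr _ _ (by show ¬ 2 * j + (σ₂ (p0 b)).val < 2 * j; omega)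
              (by show ¬ 2 * j + (σ₂ (p1 b)).val < 2 * j; omega)]
          try (congr 1 <;> exact Fin.ext (by show 2 * j + _ - 2 * j = _; omega))
      rw [hprod, sign_Psi]
      push_cast
      ring
  rw [hfilter, hbij, Finset.sum_sigma]
  have hinner : ∀ S ∈ Finset.powersetCard j (Finset.univ : Finset (Fin (j + k))),
      (∑ x : Perm (Fin (2 * j)) × Perm (Fin (2 * k)),
        (((Perm.sign x.1 : ℤ) : ℂ) * ∏ a, A (x.1 (p0 a)) (x.1 (p1 a))) *
        (((Perm.sign x.2 : ℤ) : ℂ) * ∏ b, D (x.2 (p0 b)) (x.2 (p1 b))))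
      = pfAux A * pfAux D := by
    intro S _
    rw [Fintype.sum_prod_type]
    unfold pfAux
    rw [Finset.sum_mul_sum]
  rw [Finset.sum_congr rfl hinner, Finset.sum_const, Finset.card_powersetCard,
    Finset.card_univ, Fintype.card_fin, nsmul_eq_mul]
  try ring

end PfAuxProof

namespace PfAuxProof
open Equiv Equiv.Perm Finset
variable {j k n : ℕ}

theorem pfSum_eq (M : Matrix (Fin (2 * j) ⊕ Fin (2 * k)) (Fin (2 * j) ⊕ Fin (2 * k)) ℂ) :
    pfSum M = pf (Matrix.reindex (EE j k) (EE j k) M) := rfl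

theorem pf_conj (C M : Matrix (Fin (2 * n)) (Fin (2 * n)) ℂ) :
    pf (Cᵀ * M * C) = C.det * pf M := by
  rw [pf_eq, pf_eq, pfAux_conj]
  ring

theorem reindex_mul {I J : Type*} [Fintype I] [Fintype J] [DecidableEq I] [DecidableEq J]
    (e : I ≃ J) (X Y : Matrix I I ℂ) :
    Matrix.reindex e e (X * Y) = Matrix.reindex e e X * Matrix.reindex e e Y := by
  simp only [Matrix.reindex_apply]
  rw [Matrix.submatrix_mul_equiv X Y _ e.symm _]

theorem pf_blockDiag (A : Matrix (Fin (2 * j)) (Fin (2 * j)) ℂ)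
    (D : Matrix (Fin (2 * k)) (Fin (2 * k)) ℂ) :
    pf (Matrix.reindex (EE j k) (EE j k) (Matrix.fromBlocks A 0 0 D)) = pf A * pf D := by
  rw [pf_eq, pf_eq, pf_eq, pfAux_blockDiag]
  have hfac : (Nat.choose (j + k) j : ℂ) * ((Nat.factorial j : ℂ) * (Nat.factorial k : ℂ))
      = (Nat.factorial (j + k) : ℂ) := by
    have h := Nat.choose_mul_factorial_mul_factorial (Nat.le_add_right j k)
    rw [Nat.add_sub_cancel_left] at h
    push_cast [← h]
    ring
  have h2 : ((2 : ℂ) ^ (j + k)) = 2 ^ j * 2 ^ k := pow_add 2 j k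
  have hne2 : ((2 : ℂ) ^ j) ≠ 0 := pow_ne_zero _ two_ne_zero
  have hne2' : ((2 : ℂ) ^ k) ≠ 0 := pow_ne_zero _ two_ne_zero
  have hnef : ((Nat.factorial j : ℂ)) ≠ 0 := Nat.cast_ne_zero.2 (Nat.factorial_ne_zero _)
  have hnef' : ((Nat.factorial k : ℂ)) ≠ 0 := Nat.cast_ne_zero.2 (Nat.factorial_ne_zero _)
  have hnefs : ((Nat.factorial (j + k) : ℂ)) ≠ 0 := Nat.cast_ne_zero.2 (Nat.factorial_ne_zero _)
  field_simp
  rw [h2, ← hfac]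
  ring

end PfAuxProof

open PfAuxProof

/-- Schur complement identity for Pfaffians:
`pf [[A, B],[−Bᵀ, D]] = pf(A) ⬝ pf(D + Bᵀ A⁻¹ B)`. -/
theorem pf_schur_complement {j k : ℕ}
    (A : Matrix (Fin (2 * j)) (Fin (2 * j)) ℂ)
    (D : Matrix (Fin (2 * k)) (Fin (2 * k)) ℂ)
    (B : Matrix (Fin (2 * j)) (Fin (2 * k)) ℂ)
    (hA : Aᵀ = -A) (hD : Dᵀ = -D) (hAinv : Invertible A) :
    pfSum (Matrix.fromBlocks A B (-Bᵀ) D) = pf A * pf (D + Bᵀ * A⁻¹ * B) := by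
  have hAAinv : A * A⁻¹ = 1 := Matrix.mul_inv_of_invertible A
  have hAinvA : A⁻¹ * A = 1 := Matrix.inv_mul_of_invertible A
  have hAt : (A⁻¹)ᵀ = -A⁻¹ := by
    rw [Matrix.transpose_nonsing_inv, hA]
    refine Matrix.inv_eq_right_inv ?_
    rw [Matrix.neg_mul, Matrix.mul_neg, neg_neg, hAAinv]
  have hX21 : (A⁻¹ * B)ᵀ * A = -Bᵀ := by
    rw [Matrix.transpose_mul, hAt, Matrix.mul_neg, Matrix.neg_mul,
      Matrix.mul_assoc, hAinvA, Matrix.mul_one]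
  set C : Matrix (Fin (2 * j) ⊕ Fin (2 * k)) (Fin (2 * j) ⊕ Fin (2 * k)) ℂ :=
    Matrix.fromBlocks 1 (A⁻¹ * B) 0 1 with hC
  set ND : Matrix (Fin (2 * j) ⊕ Fin (2 * k)) (Fin (2 * j) ⊕ Fin (2 * k)) ℂ :=
    Matrix.fromBlocks A 0 0 (D + Bᵀ * A⁻¹ * B) with hND
  have hfact : Cᵀ * ND * C = Matrix.fromBlocks A B (-Bᵀ) D := by
    rw [hC, hND, Matrix.fromBlocks_transpose, Matrix.fromBlocks_multiply,
      Matrix.fromBlocks_multiply]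
    rw [Matrix.fromBlocks_inj]
    refine ⟨?_, ?_, ?_, ?_⟩ <;>
      simp only [Matrix.transpose_one, Matrix.transpose_zero, Matrix.one_mul, Matrix.mul_one,
        Matrix.zero_mul, Matrix.mul_zero, add_zero, zero_add]
    · rw [← Matrix.mul_assoc, hAAinv, Matrix.one_mul]
    · exact hX21
    · rw [hX21, Matrix.neg_mul, ← Matrix.mul_assoc]
      abel
  rw [← hfact, pfSum_eq, reindex_mul, reindex_mul,
    show Matrix.reindex (EE j k) (EE j k) Cᵀ = (Matrix.reindex (EE j k) (EE j k) C)ᵀ from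
      (Matrix.transpose_reindex _ _ _).symm,
    pf_conj, Matrix.det_reindex_self, hC, Matrix.det_fromBlocks_zero₂₁, Matrix.det_one,
    Matrix.det_one, one_mul, one_mul, hND, pf_blockDiag]
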